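/- arXiv:2510.20722 — 3 statements merged into one kernel-verified Lean document; each statement's English description precedes it below -/
import Mathlib

section
/- Fix d ≥ 1 and let ρ₁,…,ρₙ be d×d density matrices that are linearly independent over ℝ (as elements of the real vector space of Hermitian matrices). Then the fragment (ρ₁,…,ρₙ; 𝓔_all) admits a noncontextual ontological model, where 𝓔_all is the set of all effects, i.e. all Hermitian E with 0 ≤ E ≤ I. (Linearly independent states admit a classical explanation even when paired with every quantum measurement.) -/
open Matrix
open scoped ComplexOrder

/-- The real vector space of `d × d` complex Hermitian matrices. -/
abbrev HermMat (d : ℕ) : Type := selfAdjoint (Matrix (Fin d) (Fin d) ℂ)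

/-- A density matrix: Hermitian, positive semidefinite, trace one. -/
def IsDensity {d : ℕ} (ρ : HermMat d) : Prop :=
  (ρ : Matrix (Fin d) (Fin d) ℂ).PosSemidef ∧ (ρ : Matrix (Fin d) (Fin d) ℂ).trace = 1

/-- An effect: Hermitian `E` with `0 ≤ E` and `E ≤ I` in the Loewner order. -/
def IsEffect {d : ℕ} (E : HermMat d) : Prop :=
  (E : Matrix (Fin d) (Fin d) ℂ).PosSemidef ∧
    ((1 : Matrix (Fin d) (Fin d) ℂ) - (E : Matrix (Fin d) (Fin d) ℂ)).PosSemidef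

/-- The set of all effects. -/
def allEffects (d : ℕ) : Set (HermMat d) := {E | IsEffect E}

/-- The identity matrix, as a Hermitian matrix. -/
def oneHerm (d : ℕ) : HermMat d :=
  ⟨1, by simp [selfAdjoint.mem_iff]⟩

/-- A noncontextual ontological model for the fragment `(ρ₁, …, ρₙ; 𝓔)`:
a finite set `Λ` together with `ℝ`-linear maps `M` and `Ξ` from the real vector space of
Hermitian matrices to real-valued functions on `Λ` such that (i) each `M (ρ i)` is a
probability distribution on `Λ`, (ii) `Ξ E` is pointwise nonnegative for `E ∈ 𝓔`,
(iii) `Ξ` sends the identity to the constant function `1`, and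
(iv) `Tr (E ρᵢ) = ∑ λ, M (ρ i) λ * Ξ E λ` for all `i` and `E ∈ 𝓔`. -/
def AdmitsNCModel {n d : ℕ} (ρ : Fin n → HermMat d) (𝓔 : Set (HermMat d)) : Prop :=
  ∃ (Λ : Type) (_ : Fintype Λ) (M Ξ : HermMat d →ₗ[ℝ] (Λ → ℝ)),
    (∀ i, (∀ l, 0 ≤ M (ρ i) l) ∧ (∑ l, M (ρ i) l) = 1) ∧
    (∀ E ∈ 𝓔, ∀ l, 0 ≤ Ξ E l) ∧
    (Ξ (oneHerm d) = fun _ => 1) ∧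
    (∀ i, ∀ E ∈ 𝓔,
      ((E : Matrix (Fin d) (Fin d) ℂ) * (ρ i : Matrix (Fin d) (Fin d) ℂ)).trace
        = ((∑ l, M (ρ i) l * Ξ E l : ℝ) : ℂ))

lemma psd_trace_nonneg' {d : ℕ} {A : Matrix (Fin d) (Fin d) ℂ} (hA : A.PosSemidef) :
    0 ≤ A.trace := by
  rw [Matrix.trace]
  apply Finset.sum_nonneg
  intro i _
  exact hA.diag_nonneg

lemma psd_mul_trace_nonneg' {d : ℕ} {A B : Matrix (Fin d) (Fin d) ℂ}
    (hA : A.PosSemidef) (hB : B.PosSemidef) : 0 ≤ (A * B).trace := by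
  obtain ⟨C, rfl⟩ : ∃ C : Matrix (Fin d) (Fin d) ℂ, A = star C * C := by
    open scoped MatrixOrder in exact CStarAlgebra.nonneg_iff_eq_star_mul_self.mp hA.nonneg
  rw [Matrix.mul_assoc, Matrix.trace_mul_comm]
  exact psd_trace_nonneg' (hB.mul_mul_conjTranspose_same C)

/-- The "response function" map `E ↦ (i ↦ re (Tr (E ρᵢ)))`. -/
noncomputable def XiMap (n d : ℕ) (ρ : Fin n → HermMat d) : HermMat d →ₗ[ℝ] (Fin n → ℝ) where
  toFun E := fun i =>
    (((E : Matrix (Fin d) (Fin d) ℂ) * (ρ i : Matrix (Fin d) (Fin d) ℂ)).trace).re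
  map_add' E F := by
    funext i
    simp [AddSubgroup.coe_add, add_mul]
  map_smul' c E := by
    funext i
    simp [selfAdjoint.val_smul, smul_mul_assoc, Complex.real_smul]

/-- linearly independent density matrices, paired with the set of all effects,
admit a noncontextual ontological model. -/
theorem linearIndependent_states_admit_ncModel
    (d n : ℕ) (hd : 1 ≤ d) (ρ : Fin n → HermMat d)
    (hρ : ∀ i, IsDensity (ρ i))
    (hLI : LinearIndependent ℝ ρ) :
    AdmitsNCModel ρ (allEffects d) := by
  have hinj : LinearMap.ker (Finsupp.linearCombination ℝ ρ) = ⊥ := LinearMap.ker_eq_bot.mpr hLI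
  obtain ⟨g, hg⟩ := (Finsupp.linearCombination ℝ ρ).exists_leftInverse_of_injective hinj
  set M : HermMat d →ₗ[ℝ] (Fin n → ℝ) := (Finsupp.lcoeFun).comp g with hM
  have hgρ : ∀ j, g (ρ j) = Finsupp.single j 1 := by
    intro j
    have : (Finsupp.linearCombination ℝ ρ) (Finsupp.single j 1) = ρ j := by
      simp [Finsupp.linearCombination_single]
    rw [← this, ← LinearMap.comp_apply, hg, LinearMap.id_apply]
  have hMapp : ∀ j l, M (ρ j) l = if j = l then 1 else 0 := by
    intro j l
    simp [hM, Finsupp.lcoeFun, hgρ, Finsupp.single_apply]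
  set Ξ := XiMap n d ρ with hΞ
  have hΞapp : ∀ (E : HermMat d) i,
      Ξ E i = (((E : Matrix (Fin d) (Fin d) ℂ) * (ρ i : Matrix (Fin d) (Fin d) ℂ)).trace).re :=
    fun _ _ => rfl
  have htr : ∀ (E : HermMat d), E ∈ allEffects d → ∀ i,
      0 ≤ ((E : Matrix (Fin d) (Fin d) ℂ) * (ρ i : Matrix (Fin d) (Fin d) ℂ)).trace := by
    intro E hE i
    exact psd_mul_trace_nonneg' hE.1 (hρ i).1
  refine ⟨Fin n, inferInstance, M, Ξ, ?_, ?_, ?_, ?_⟩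
  · intro i
    constructor
    · intro l
      rw [hMapp]
      split <;> norm_num
    · simp [hMapp]
  · intro E hE l
    rw [hΞapp]
    exact (Complex.le_def.mp (htr E hE l)).1
  · funext i
    rw [hΞapp]
    simp [oneHerm, (hρ i).2]
  · intro i E hE
    have h0 := htr E hE i
    have him : (((E : Matrix (Fin d) (Fin d) ℂ) * (ρ i : Matrix (Fin d) (Fin d) ℂ)).trace).im = 0 :=
      ((Complex.le_def.mp h0).2).symm
    have hsum : (∑ l, M (ρ i) l * Ξ E l) = Ξ E i := by
      rw [Finset.sum_eq_single i]
      · rw [hMapp]; simp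
      · intro b _ hb
        rw [hMapp]
        simp [(Ne.symm hb)]
      · simp
    rw [hsum, hΞapp]
    exact Complex.ext (by simp) (by simp [him])
end

section
/- Fix d ≥ 1 and let ρ₁,…,ρₙ (n ≥ 2) be pairwise distinct rank-one orthogonal projections on ℂ^d (pure states) that are linearly dependent over ℝ as Hermitian matrices. Then the fragment (ρ₁,…,ρₙ; 𝓔_all) admits NO noncontextual ontological model, where 𝓔_all is the set of all effects. (A linearly dependent set of pure states, paired with all measurements, is contextual.) -/
open Matrix
open scoped ComplexOrder

/-- A pure state: a density matrix that is a rank-one orthogonal projection,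
equivalently a density matrix `ρ` with `ρ² = ρ`. -/
def IsPureState {d : ℕ} (ρ : HermMat d) : Prop :=
  IsDensity ρ ∧
    (ρ : Matrix (Fin d) (Fin d) ℂ) * (ρ : Matrix (Fin d) (Fin d) ℂ) = (ρ : Matrix (Fin d) (Fin d) ℂ)


open scoped ComplexStarModule

namespace NCAux

variable {d : ℕ}

local notation "Mat" => Matrix (Fin d) (Fin d) ℂ




open scoped MatrixOrder in
lemma psd_trace_zero {A : Mat} (hA : A.PosSemidef) (h : A.trace = 0) : A = 0 := by
  have hB : CFC.sqrt A * CFC.sqrt A = A := by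
    have := CFC.sq_sqrt A hA.nonneg; rwa [pow_two] at this
  set B := CFC.sqrt A with hBdef
  have hherm : Bᴴ = B := (CFC.sqrt_nonneg A).posSemidef.1
  have htr : (Bᴴ * B).trace = 0 := by rw [hherm, hB, h]
  have hBzero : B = 0 := by
    have hsum : ∑ j, ∑ i, Complex.normSq (B i j) = 0 := by
      have : (Bᴴ * B).trace = ∑ j, ∑ i, (Complex.normSq (B i j) : ℂ) := by
        simp only [Matrix.trace, Matrix.diag, Matrix.mul_apply, Matrix.conjTranspose_apply]
        congr 1; ext j; congr 1; ext i
        rw [Complex.star_def, mul_comm, Complex.mul_conj]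
      rw [this] at htr
      exact_mod_cast htr
    ext i j
    have h1 : ∀ j ∈ Finset.univ, (0:ℝ) ≤ ∑ i, Complex.normSq (B i j) :=
      fun j _ => Finset.sum_nonneg fun i _ => Complex.normSq_nonneg _
    have h2 := (Finset.sum_eq_zero_iff_of_nonneg h1).mp hsum j (Finset.mem_univ j)
    have h3 := (Finset.sum_eq_zero_iff_of_nonneg
      (fun i _ => Complex.normSq_nonneg (B i j))).mp h2 i (Finset.mem_univ i)
    simpa using Complex.normSq_eq_zero.mp h3
  rw [← hB, hBzero, mul_zero]

lemma herm_idem_psd {A : Mat} (h : A.IsHermitian) (h2 : A * A = A) : A.PosSemidef := by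
  have := Matrix.posSemidef_conjTranspose_mul_self A
  rwa [h.eq, h2] at this

open scoped MatrixOrder in
/-- If `p, τ` are PSD, `p` idempotent, `trace (p*τ) = trace τ`, then `τ = p * τ`. -/
lemma absorb {p τ : Mat} (hp : p.IsHermitian) (hpp : p * p = p)
    (hτ : τ.PosSemidef) (h : ((1 - p) * τ).trace = 0) : p * τ = τ := by
  set q : Mat := 1 - p with hq
  have hqherm : q.IsHermitian := by
    unfold q
    exact (Matrix.isHermitian_one).sub hp
  have hqq : q * q = q := by
    unfold q
    rw [sub_mul, mul_sub, mul_sub, one_mul, mul_one, one_mul, hpp, sub_self, sub_zero]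
  have hqτq : q * τ * q = 0 := by
    apply psd_trace_zero
    · have := hτ.mul_mul_conjTranspose_same q
      rwa [hqherm.eq] at this
    · rw [Matrix.trace_mul_cycle, hqq, h]
  have hBB : CFC.sqrt τ * CFC.sqrt τ = τ := by
    have := CFC.sq_sqrt τ hτ.nonneg; rwa [pow_two] at this
  set B := CFC.sqrt τ with hBdef
  have hBherm : Bᴴ = B := (CFC.sqrt_nonneg τ).posSemidef.1
  have hBq : B * q = 0 := by
    have : (B * q)ᴴ * (B * q) = 0 := by
      rw [Matrix.conjTranspose_mul, hBherm, hqherm.eq]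
      calc q * B * (B * q) = q * (B * B) * q := by noncomm_ring
        _ = 0 := by rw [hBB, hqτq]
    exact Matrix.conjTranspose_mul_self_eq_zero.mp this
  have hτq : τ * q = 0 := by
    calc τ * q = B * (B * q) := by rw [← mul_assoc, hBB]
      _ = 0 := by rw [hBq, mul_zero]
  have hqτ : q * τ = 0 := by
    have : (τ * q)ᴴ = 0 := by rw [hτq, Matrix.conjTranspose_zero]
    rwa [Matrix.conjTranspose_mul, hqherm.eq, hτ.1.eq] at this
  have : (1 - p) * τ = 0 := hqτ
  rw [sub_mul, one_mul, sub_eq_zero] at this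
  exact this.symm

/-- Extract a unit vector from a pure state. -/
lemma pure_vec {p : Mat} (hp : p.PosSemidef) (hpp : p * p = p) (htr : p.trace = 1) :
    ∃ ψ : Fin d → ℂ, p = Matrix.vecMulVec ψ (star ψ) ∧ star ψ ⬝ᵥ ψ = 1 := by
  -- find a nonzero column
  have hpne : p ≠ 0 := by
    intro h0; rw [h0] at htr; simp at htr
  have hcol : ∃ j, (fun i => p i j) ≠ 0 := by
    by_contra hall
    push_neg at hall
    apply hpne
    ext i j
    have := congrFun (hall j) i
    simpa using this
  obtain ⟨j, hj⟩ := hcol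
  set v : Fin d → ℂ := fun i => p i j with hv
  have hpv : p *ᵥ v = v := by
    funext i
    simp only [Matrix.mulVec, dotProduct, hv]
    have : (p * p) i j = p i j := by rw [hpp]
    simpa [Matrix.mul_apply] using this
  -- c := star v ⬝ᵥ v = p j j real positive
  have hc : star v ⬝ᵥ v = p j j := by
    have : (p * p) j j = p j j := by rw [hpp]
    rw [Matrix.mul_apply] at this
    rw [← this]
    simp only [dotProduct, Pi.star_apply, hv]
    congr 1; ext k
    have hstar : star (p k j) = p j k := by
      have := congrFun (congrFun hp.1.eq j) k
      simpa [Matrix.conjTranspose_apply] using this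
    rw [hstar, mul_comm]
  -- the norm-squared of v
  set r : ℝ := ∑ i, Complex.normSq (v i) with hr
  have hcr : star v ⬝ᵥ v = (r : ℂ) := by
    simp only [dotProduct, Pi.star_apply, hr]
    push_cast
    congr 1; ext i
    rw [Complex.star_def, mul_comm, Complex.mul_conj]
  have hrpos : 0 < r := by
    rcases Function.ne_iff.mp hj with ⟨i, hi⟩
    have : 0 < Complex.normSq (v i) := Complex.normSq_pos.mpr (by simpa using hi)
    exact lt_of_lt_of_le this (Finset.single_le_sum
      (fun k _ => Complex.normSq_nonneg (v k)) (Finset.mem_univ i))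
  have hrne : (r : ℂ) ≠ 0 := by exact_mod_cast hrpos.ne'
  -- the candidate rank-one matrix
  set q : Mat := (r⁻¹ : ℂ) • Matrix.vecMulVec v (star v) with hqdef
  have hdot : ∀ k : Fin d, ∑ m, (v m * star (v m) : ℂ) = (r : ℂ) := by
    intro k
    rw [← hcr]
    simp only [dotProduct, Pi.star_apply]
    congr 1; ext m; ring
  have hpvmv : p * Matrix.vecMulVec v (star v) = Matrix.vecMulVec v (star v) := by
    ext i k
    simp only [Matrix.mul_apply, Matrix.vecMulVec_apply, Pi.star_apply]
    have : (∑ m, p i m * (v m * star (v m) * 0 + v m * star (v k))) = (p *ᵥ v) i * star (v k) := by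
      simp only [Matrix.mulVec, dotProduct, Finset.sum_mul]
      congr 1; ext m; ring
    rw [hpv] at this
    simpa using this
  have hpq : p * q = q := by
    rw [hqdef, Matrix.mul_smul, hpvmv]
  have hqp : q * p = q := by
    have h1 : (p * q)ᴴ = qᴴ * pᴴ := Matrix.conjTranspose_mul p q
    have hqherm : qᴴ = q := by
      rw [hqdef]
      rw [Matrix.conjTranspose_smul]
      congr 1
      · simp [Complex.star_def, Complex.conj_ofReal]
      · ext i k
        simp [Matrix.conjTranspose_apply, Matrix.vecMulVec_apply, mul_comm]
    rw [hpq, hqherm, hp.1.eq] at h1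
    exact h1.symm
  have hvv : Matrix.vecMulVec v (star v) * Matrix.vecMulVec v (star v)
      = (r : ℂ) • Matrix.vecMulVec v (star v) := by
    ext i k
    simp only [Matrix.mul_apply, Matrix.vecMulVec_apply, Pi.star_apply, Matrix.smul_apply,
      smul_eq_mul]
    calc ∑ m, v i * star (v m) * (v m * star (v k))
        = (∑ m, v m * star (v m)) * (v i * star (v k)) := by
          rw [Finset.sum_mul]; congr 1; ext m; ring
      _ = (r : ℂ) * (v i * star (v k)) := by rw [hdot k]
  have hqq : q * q = q := by
    rw [hqdef, Matrix.smul_mul, Matrix.mul_smul, smul_smul, hvv, smul_smul]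
    congr 1
    field_simp
  have htrq : q.trace = 1 := by
    rw [hqdef, Matrix.trace_smul]
    have : (Matrix.vecMulVec v (star v)).trace = (r : ℂ) := by
      simp only [Matrix.trace, Matrix.diag, Matrix.vecMulVec_apply]
      exact hdot j
    rw [this, smul_eq_mul]
    field_simp
  have hpeq : p = q := by
    have hD : (p - q) * (p - q) = p - q := by
      rw [sub_mul, mul_sub, mul_sub, hpp, hpq, hqp, hqq]
      abel
    have hDherm : (p - q).IsHermitian := by
      have hqherm : q.IsHermitian := by
        have h1 : (p * q)ᴴ = qᴴ * pᴴ := Matrix.conjTranspose_mul p q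
        -- reuse: prove directly
        rw [hqdef, Matrix.IsHermitian, Matrix.conjTranspose_smul]
        congr 1
        · simp [Complex.star_def, Complex.conj_ofReal]
        · ext i k
          simp [Matrix.conjTranspose_apply, Matrix.vecMulVec_apply, mul_comm]
      exact hp.1.sub hqherm
    have hDtr : (p - q).trace = 0 := by
      rw [Matrix.trace_sub, htr, htrq, sub_self]
    have := psd_trace_zero (herm_idem_psd hDherm hD) hDtr
    exact sub_eq_zero.mp this
  -- normalize
  refine ⟨((Real.sqrt r : ℝ) : ℂ)⁻¹ • v, ?_, ?_⟩
  · have hsq : ((Real.sqrt r : ℝ) : ℂ) * ((Real.sqrt r : ℝ) : ℂ) = (r : ℂ) := by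
      rw [← Complex.ofReal_mul, Real.mul_self_sqrt hrpos.le]
    rw [hpeq, hqdef]
    ext i k
    simp only [Matrix.vecMulVec_apply, Pi.star_apply, Pi.smul_apply, smul_eq_mul,
      Matrix.smul_apply, star_mul', star_inv₀]
    have hstar : star ((Real.sqrt r : ℝ) : ℂ) = ((Real.sqrt r : ℝ) : ℂ) := by
      simp [Complex.star_def, Complex.conj_ofReal]
    rw [hstar]
    have hrinv : (r : ℂ)⁻¹ = ((Real.sqrt r : ℝ) : ℂ)⁻¹ * ((Real.sqrt r : ℝ) : ℂ)⁻¹ := by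
      rw [← mul_inv, hsq]
    rw [hrinv]; ring
  · have hsq : ((Real.sqrt r : ℝ) : ℂ) * ((Real.sqrt r : ℝ) : ℂ) = (r : ℂ) := by
      rw [← Complex.ofReal_mul, Real.mul_self_sqrt hrpos.le]
    have hstar : star (((Real.sqrt r : ℝ) : ℂ)⁻¹) = ((Real.sqrt r : ℝ) : ℂ)⁻¹ := by
      simp [Complex.star_def, Complex.conj_ofReal]
    simp only [dotProduct, Pi.star_apply, Pi.smul_apply, smul_eq_mul, star_mul', hstar]
    have : ∑ i, ((Real.sqrt r : ℝ) : ℂ)⁻¹ * star (v i) * (((Real.sqrt r : ℝ) : ℂ)⁻¹ * v i)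
        = (((Real.sqrt r : ℝ) : ℂ) * ((Real.sqrt r : ℝ) : ℂ))⁻¹ * (star v ⬝ᵥ v) := by
      rw [mul_inv, dotProduct, Finset.mul_sum]
      congr 1; ext i
      simp only [Pi.star_apply]; ring
    rw [this, hsq, hcr]
    field_simp

lemma trace_pure_mul {p τ : Mat} {ψ : Fin d → ℂ} (hψ : p = Matrix.vecMulVec ψ (star ψ)) :
    (p * τ).trace = star ψ ⬝ᵥ (τ *ᵥ ψ) := by
  subst hψ
  simp only [Matrix.trace, Matrix.diag, Matrix.mul_apply, Matrix.vecMulVec_apply, Pi.star_apply,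
    dotProduct, Matrix.mulVec]
  simp only [Finset.sum_mul, Finset.mul_sum]
  rw [Finset.sum_comm]
  congr 1; ext b
  congr 1; ext a
  ring

lemma pure_rigidity {p τ : Mat} (hp : p.PosSemidef) (hpp : p * p = p) (hptr : p.trace = 1)
    (hτ : τ.PosSemidef) (hτtr : τ.trace = 1) (hover : (p * τ).trace = 1) : τ = p := by
  have h0 : ((1 - p) * τ).trace = 0 := by
    rw [sub_mul, one_mul, Matrix.trace_sub, hτtr, hover, sub_self]
  have hpτ : p * τ = τ := absorb hp.1 hpp hτ h0
  have hτp : τ * p = τ := by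
    have := congrArg Matrix.conjTranspose hpτ
    rwa [Matrix.conjTranspose_mul, hτ.1.eq, hp.1.eq] at this
  obtain ⟨ψ, hψ, hψ1⟩ := pure_vec hp hpp hptr
  have hτpτp : p * τ * p = τ := by rw [hpτ, hτp]
  have hover' : star ψ ⬝ᵥ (τ *ᵥ ψ) = 1 := by rw [← trace_pure_mul hψ, hover]
  have hcomp : p * τ * p = (star ψ ⬝ᵥ (τ *ᵥ ψ)) • p := by
    conv_lhs => rw [hψ]
    conv_rhs => rw [hψ]
    ext i k
    simp only [Matrix.mul_apply, Matrix.vecMulVec_apply, Pi.star_apply, Matrix.smul_apply,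
      smul_eq_mul, Matrix.mulVec, dotProduct]
    simp only [Finset.sum_mul, Finset.mul_sum]
    rw [Finset.sum_comm]
    congr 1; ext b
    congr 1; ext m
    ring
  rw [← hτpτp, hcomp, hover', one_smul]



noncomputable def cExt (φ : HermMat d →ₗ[ℝ] ℝ) : Mat →ₗ[ℂ] ℂ where
  toFun A := (φ (ℜ A) : ℂ) + Complex.I * (φ (ℑ A) : ℂ)
  map_add' A B := by simp only [map_add]; push_cast; ring
  map_smul' z A := by
    simp only [realPart_smul, imaginaryPart_smul, map_sub, map_add, _root_.map_smul,
      smul_eq_mul, RingHom.id_apply]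
    push_cast
    apply Complex.ext <;> simp <;> ring

lemma cExt_herm (φ : HermMat d →ₗ[ℝ] ℝ) (A : HermMat d) :
    cExt φ (A : Mat) = (φ A : ℂ) := by
  have h1 : ℜ ((A : Mat)) = A := Subtype.ext A.2.coe_realPart
  have h2 : ℑ ((A : Mat)) = 0 := A.2.imaginaryPart
  simp [cExt, h1, h2]

noncomputable def tauMat (φ : HermMat d →ₗ[ℝ] ℝ) : Mat :=
  Matrix.of fun a b => cExt φ (Matrix.single b a 1)

lemma trace_mul_tauMat (φ : HermMat d →ₗ[ℝ] ℝ) (A : Mat) :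
    (A * tauMat φ).trace = cExt φ A := by
  conv_rhs => rw [Matrix.matrix_eq_sum_single A]
  rw [map_sum]
  simp only [Matrix.trace, Matrix.diag, Matrix.mul_apply, tauMat, Matrix.of_apply]
  congr 1; ext a
  rw [map_sum]
  congr 1; ext b
  have h1 : Matrix.single a b (A a b) = A a b • Matrix.single a b (1:ℂ) := by
    rw [Matrix.smul_single, smul_eq_mul, mul_one]
  rw [h1, _root_.map_smul, smul_eq_mul]

lemma cExt_star (φ : HermMat d →ₗ[ℝ] ℝ) (A : Mat) : cExt φ Aᴴ = star (cExt φ A) := by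
  have hstar : Aᴴ = star A := (Matrix.star_eq_conjTranspose A).symm
  have h1 : ℜ (star A) = ℜ A := Subtype.ext <| by
    rw [realPart_apply_coe, realPart_apply_coe, star_star, add_comm]
  have h2 : ℑ (star A) = - ℑ A := Subtype.ext <| by
    rw [imaginaryPart_apply_coe, NegMemClass.coe_neg, imaginaryPart_apply_coe, star_star]
    module
  rw [hstar]
  show (φ (ℜ (star A)) : ℂ) + Complex.I * (φ (ℑ (star A)) : ℂ) = _
  rw [h1, h2, map_neg]
  show _ = star ((φ (ℜ A) : ℂ) + Complex.I * (φ (ℑ A) : ℂ))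
  apply Complex.ext <;> simp

lemma herm_idem_psd' {A : Mat} (h : A.IsHermitian) (h2 : A * A = A) : A.PosSemidef := by
  have := Matrix.posSemidef_conjTranspose_mul_self A
  rwa [h.eq, h2] at this

lemma isEffect_of_idem {A : Mat} (h : A.IsHermitian) (h2 : A * A = A) :
    IsEffect (⟨A, h⟩ : HermMat d) := by
  constructor
  · exact herm_idem_psd' h h2
  · refine herm_idem_psd' (Matrix.isHermitian_one.sub h) ?_
    rw [sub_mul, mul_sub, mul_sub, one_mul, mul_one, one_mul, h2, sub_self, sub_zero]

lemma outer_isHermitian (x : Fin d → ℂ) :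
    (Matrix.vecMulVec x (star x)).IsHermitian := by
  ext i k
  simp [Matrix.conjTranspose_apply, Matrix.vecMulVec_apply, mul_comm]

lemma outer_mul_outer (x : Fin d → ℂ) :
    Matrix.vecMulVec x (star x) * Matrix.vecMulVec x (star x)
      = ((∑ i, Complex.normSq (x i) : ℝ) : ℂ) • Matrix.vecMulVec x (star x) := by
  have hdot : ∑ m, (x m * star (x m) : ℂ) = ((∑ i, Complex.normSq (x i) : ℝ) : ℂ) := by
    push_cast
    congr 1; ext m
    rw [Complex.star_def, Complex.mul_conj]
  ext i k
  simp only [Matrix.mul_apply, Matrix.vecMulVec_apply, Pi.star_apply, Matrix.smul_apply,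
    smul_eq_mul]
  calc ∑ m, x i * star (x m) * (x m * star (x k))
      = (∑ m, x m * star (x m)) * (x i * star (x k)) := by
        rw [Finset.sum_mul]; congr 1; ext m; ring
    _ = _ := by rw [hdot]

lemma phi_outer_nonneg (φ : HermMat d →ₗ[ℝ] ℝ)
    (hpos : ∀ E : HermMat d, IsEffect E → 0 ≤ φ E) (x : Fin d → ℂ) :
    0 ≤ φ ⟨Matrix.vecMulVec x (star x), outer_isHermitian x⟩ := by
  by_cases hx : x = 0
  · have : (⟨Matrix.vecMulVec x (star x), outer_isHermitian x⟩ : HermMat d) = 0 := by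
      apply Subtype.ext
      show Matrix.vecMulVec x (star x) = 0
      ext i k
      simp [hx, Matrix.vecMulVec_apply]
    rw [this, map_zero]
  · set r : ℝ := ∑ i, Complex.normSq (x i) with hr
    have hrpos : 0 < r := by
      rcases Function.ne_iff.mp hx with ⟨i, hi⟩
      have : 0 < Complex.normSq (x i) := Complex.normSq_pos.mpr (by simpa using hi)
      exact lt_of_lt_of_le this (Finset.single_le_sum
        (fun k _ => Complex.normSq_nonneg (x k)) (Finset.mem_univ i))
    have hsmul_herm : ((r⁻¹ : ℝ) • Matrix.vecMulVec x (star x)).IsHermitian := by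
      ext i k
      have := congrFun (congrFun (outer_isHermitian x).eq i) k
      simp only [Matrix.conjTranspose_apply, Matrix.smul_apply] at this ⊢
      rw [star_smul, star_trivial, this]
    have hidem : ((r⁻¹ : ℝ) • Matrix.vecMulVec x (star x)) *
        ((r⁻¹ : ℝ) • Matrix.vecMulVec x (star x)) = (r⁻¹ : ℝ) • Matrix.vecMulVec x (star x) := by
      have houter : Matrix.vecMulVec x (star x) * Matrix.vecMulVec x (star x)
          = (r : ℝ) • Matrix.vecMulVec x (star x) := by
        rw [outer_mul_outer, ← hr]
        ext i k; simp [Complex.real_smul]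
      rw [Matrix.smul_mul, Matrix.mul_smul, houter, smul_smul, smul_smul]
      congr 1
      field_simp
    have heff := isEffect_of_idem hsmul_herm hidem
    have hdecomp : (⟨Matrix.vecMulVec x (star x), outer_isHermitian x⟩ : HermMat d)
        = r • ⟨(r⁻¹ : ℝ) • Matrix.vecMulVec x (star x), hsmul_herm⟩ := by
      apply Subtype.ext
      show Matrix.vecMulVec x (star x) = r • (r⁻¹ : ℝ) • Matrix.vecMulVec x (star x)
      rw [smul_smul, mul_inv_cancel₀ hrpos.ne', one_smul]
    rw [hdecomp, _root_.map_smul]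
    exact smul_nonneg hrpos.le (hpos _ heff)

lemma tauMat_isHermitian (φ : HermMat d →ₗ[ℝ] ℝ) : (tauMat φ).IsHermitian := by
  ext i j
  have hE : (Matrix.single i j (1:ℂ))ᴴ = Matrix.single j i 1 := by
    ext a b
    simp [Matrix.single, Matrix.conjTranspose_apply, apply_ite (star : ℂ → ℂ), and_comm]
  show star (tauMat φ j i) = tauMat φ i j
  show star (cExt φ (Matrix.single i j 1)) = cExt φ (Matrix.single j i 1)
  rw [← cExt_star, hE]

lemma tauMat_posSemidef (φ : HermMat d →ₗ[ℝ] ℝ)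
    (hpos : ∀ E : HermMat d, IsEffect E → 0 ≤ φ E) : (tauMat φ).PosSemidef := by
  refine Matrix.PosSemidef.of_dotProduct_mulVec_nonneg (tauMat_isHermitian φ) fun x => ?_
  have key : star x ⬝ᵥ (tauMat φ *ᵥ x) = cExt φ (Matrix.vecMulVec x (star x)) := by
    conv_rhs => rw [Matrix.matrix_eq_sum_single (Matrix.vecMulVec x (star x))]
    rw [map_sum]
    simp only [dotProduct, Matrix.mulVec, tauMat, Matrix.of_apply, Pi.star_apply,
      Matrix.vecMulVec_apply, Finset.mul_sum]
    rw [Finset.sum_comm]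
    congr 1; ext b
    rw [map_sum]
    congr 1; ext a
    have h1 : Matrix.single b a (x b * star (x a)) =
        (x b * star (x a)) • Matrix.single b a (1:ℂ) := by
      rw [Matrix.smul_single, smul_eq_mul, mul_one]
    rw [h1, _root_.map_smul, smul_eq_mul]
    ring
  rw [key]
  have h2 := phi_outer_nonneg φ hpos x
  have h3 : cExt φ (Matrix.vecMulVec x (star x))
      = (φ ⟨Matrix.vecMulVec x (star x), outer_isHermitian x⟩ : ℂ) :=
    cExt_herm φ ⟨Matrix.vecMulVec x (star x), outer_isHermitian x⟩
  rw [h3]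
  exact_mod_cast Complex.zero_le_real.mpr h2

lemma tauMat_trace (φ : HermMat d →ₗ[ℝ] ℝ) (hone : φ (oneHerm d) = 1) :
    (tauMat φ).trace = 1 := by
  have h := trace_mul_tauMat φ 1
  rw [one_mul] at h
  rw [h]
  have : (1 : Mat) = ((oneHerm d : HermMat d) : Mat) := rfl
  rw [this, cExt_herm, hone, Complex.ofReal_one]


lemma isEffect_of_idem' (E : HermMat d) (h2 : (E : Mat) * (E : Mat) = (E : Mat)) :
    IsEffect E := by
  have h : (E : Mat).IsHermitian := E.2
  refine ⟨herm_idem_psd h h2, herm_idem_psd (Matrix.isHermitian_one.sub h) ?_⟩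
  rw [sub_mul, mul_sub, mul_sub, one_mul, mul_one, one_mul, h2, sub_self, sub_zero]

lemma tau_eq_pure (φ : HermMat d →ₗ[ℝ] ℝ)
    (hpos : ∀ E : HermMat d, IsEffect E → 0 ≤ φ E)
    (hone : φ (oneHerm d) = 1)
    (p : HermMat d) (hpsd : (p : Mat).PosSemidef)
    (hidem : (p : Mat) * (p : Mat) = (p : Mat))
    (hptr : (p : Mat).trace = 1) (hφp : φ p = 1) :
    tauMat φ = (p : Mat) := by
  refine pure_rigidity hpsd hidem hptr (tauMat_posSemidef φ hpos) (tauMat_trace φ hone) ?_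
  rw [trace_mul_tauMat, cExt_herm, hφp, Complex.ofReal_one]

end NCAux

/-- pairwise distinct pure states that are linearly dependent over `ℝ`,
paired with the set of all effects, admit no noncontextual ontological model. -/
theorem linearDependent_pure_states_contextual
    (d n : ℕ) (hd : 1 ≤ d) (hn : 2 ≤ n) (ρ : Fin n → HermMat d)
    (hpure : ∀ i, IsPureState (ρ i))
    (hdist : Function.Injective ρ)
    (hLD : ¬ LinearIndependent ℝ ρ) :
    ¬ AdmitsNCModel ρ (allEffects d) := by
  classical
  rintro ⟨Λ, hΛ, M, Ξ, hM, hΞpos, hΞone, hTr⟩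
  have hpsd : ∀ i, ((ρ i : Matrix (Fin d) (Fin d) ℂ)).PosSemidef := fun i => (hpure i).1.1
  have htr1 : ∀ i, (ρ i : Matrix (Fin d) (Fin d) ℂ).trace = 1 := fun i => (hpure i).1.2
  have hidem : ∀ i, (ρ i : Matrix (Fin d) (Fin d) ℂ) * (ρ i : Matrix (Fin d) (Fin d) ℂ)
      = (ρ i : Matrix (Fin d) (Fin d) ℂ) := fun i => (hpure i).2
  have hEff : ∀ i, ρ i ∈ allEffects d := fun i => NCAux.isEffect_of_idem' (ρ i) (hidem i)
  have hEff1 : ∀ i, (oneHerm d - ρ i) ∈ allEffects d := by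
    intro i
    apply NCAux.isEffect_of_idem'
    have hcoe : ((oneHerm d - ρ i : HermMat d) : Matrix (Fin d) (Fin d) ℂ)
        = 1 - (ρ i : Matrix (Fin d) (Fin d) ℂ) := rfl
    rw [hcoe, sub_mul, mul_sub, mul_sub, one_mul, mul_one, one_mul, hidem i, sub_self, sub_zero]
  have hΞle : ∀ i l, Ξ (ρ i) l ≤ 1 := by
    intro i l
    have h0 := hΞpos _ (hEff1 i) l
    rw [map_sub] at h0
    have h1 : Ξ (oneHerm d) l = 1 := by rw [hΞone]
    simp only [Pi.sub_apply, h1] at h0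
    linarith
  have hsum1 : ∀ i, ∑ l, M (ρ i) l * Ξ (ρ i) l = 1 := by
    intro i
    have h := hTr i (ρ i) (hEff i)
    rw [hidem i, htr1 i] at h
    exact_mod_cast h.symm
  have hΞone' : ∀ i l, 0 < M (ρ i) l → Ξ (ρ i) l = 1 := by
    intro i l hl
    have hz : ∑ l, M (ρ i) l * (1 - Ξ (ρ i) l) = 0 := by
      simp only [mul_sub, mul_one, Finset.sum_sub_distrib, hsum1 i, (hM i).2, sub_self]
    have hterm := (Finset.sum_eq_zero_iff_of_nonneg (fun l _ =>
      mul_nonneg ((hM i).1 l) (by linarith [hΞle i l]))).mp hz l (Finset.mem_univ l)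
    rcases mul_eq_zero.mp hterm with h | h
    · exact absurd h hl.ne'
    · linarith
  have hdisj : ∀ i j l, 0 < M (ρ i) l → 0 < M (ρ j) l → i = j := by
    intro i j l hi hj
    by_contra hij
    set φ : HermMat d →ₗ[ℝ] ℝ := (LinearMap.proj l).comp Ξ with hφ
    have hpos : ∀ E : HermMat d, IsEffect E → 0 ≤ φ E := fun E hE => hΞpos E hE l
    have hone : φ (oneHerm d) = 1 := by
      show Ξ (oneHerm d) l = 1
      rw [hΞone]
    have h1 := NCAux.tau_eq_pure φ hpos hone (ρ i) (hpsd i) (hidem i) (htr1 i) (hΞone' i l hi)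
    have h2 := NCAux.tau_eq_pure φ hpos hone (ρ j) (hpsd j) (hidem j) (htr1 j) (hΞone' j l hj)
    exact hij (hdist (Subtype.ext (h1.symm.trans h2)))
  obtain ⟨c, hc, i0, hi0⟩ := Fintype.not_linearIndependent_iff.mp hLD
  have hM0 : ∑ i, c i • M (ρ i) = 0 := by
    have : ∑ i, c i • M (ρ i) = M (∑ i, c i • ρ i) := by
      rw [map_sum]
      congr 1; ext i
      rw [_root_.map_smul]
    rw [this, hc, map_zero]
  have hl0 : ∃ l, 0 < M (ρ i0) l := by
    by_contra h
    push_neg at h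
    have hz : ∑ l, M (ρ i0) l = 0 :=
      Finset.sum_eq_zero fun l _ => le_antisymm (h l) ((hM i0).1 l)
    rw [(hM i0).2] at hz
    norm_num at hz
  obtain ⟨l0, hl0⟩ := hl0
  have heval : ∑ i, c i * M (ρ i) l0 = 0 := by
    have := congrFun hM0 l0
    simpa [Finset.sum_apply, Pi.smul_apply, smul_eq_mul] using this
  have hzero : ∀ i ∈ Finset.univ, i ≠ i0 → c i * M (ρ i) l0 = 0 := by
    intro i _ hne
    have hMz : M (ρ i) l0 = 0 := by
      rcases lt_or_eq_of_le ((hM i).1 l0) with hlt | heq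
      · exact absurd (hdisj i i0 l0 hlt hl0) hne
      · exact heq.symm
    rw [hMz, mul_zero]
  rw [Finset.sum_eq_single_of_mem i0 (Finset.mem_univ i0) hzero] at heval
  rcases mul_eq_zero.mp heval with h | h
  · exact hi0 h
  · exact absurd h hl0.ne'
end

section
/- There exists ε > 0 with the following property: there are a finite set Λ and ℝ-linear maps M and Ξ from the real vector space of 2×2 Hermitian matrices to the real-valued functions on Λ such that (i) M(ρ) is a probability distribution on Λ for every 2×2 density matrix ρ with ‖ρ − I/2‖ ≤ ε (Frobenius norm); (ii) Ξ(E)(λ) ≥ 0 for every effect E (Hermitian with 0 ≤ E ≤ I) and every λ ∈ Λ; (iii) Ξ(I) is the constant function 1; and (iv) Tr(E ρ) = Σ_{λ∈Λ} M(ρ)(λ) Ξ(E)(λ) for every such state ρ and every effect E. (An ε-ball of qubit states around the maximally mixed state, paired with all effects, admits a noncontextual explanation.) -/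
open Matrix
open scoped ComplexOrder

/-- The Frobenius (Hilbert–Schmidt) norm of a `2 × 2` complex matrix. -/
noncomputable def frobeniusNorm (A : Matrix (Fin 2) (Fin 2) ℂ) : ℝ :=
  Real.sqrt (∑ i, ∑ j, ‖A i j‖ ^ 2)

-- sign functions
def s1 : Fin 8 → ℝ
  | 0 => 1 | 1 => -1 | 2 => 1 | 3 => -1 | 4 => 1 | 5 => -1 | 6 => 1 | 7 => -1
def s2 : Fin 8 → ℝ
  | 0 => 1 | 1 => 1 | 2 => -1 | 3 => -1 | 4 => 1 | 5 => 1 | 6 => -1 | 7 => -1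
def s3 : Fin 8 → ℝ
  | 0 => 1 | 1 => 1 | 2 => 1 | 3 => 1 | 4 => -1 | 5 => -1 | 6 => -1 | 7 => -1

noncomputable def Mfun (A : HermMat 2) (l : Fin 8) : ℝ :=
  (((A : Matrix (Fin 2) (Fin 2) ℂ) 0 0).re + ((A : Matrix (Fin 2) (Fin 2) ℂ) 1 1).re
    + 2 * (s1 l * (2 * ((A : Matrix (Fin 2) (Fin 2) ℂ) 0 1).re)
         + s2 l * (-2 * ((A : Matrix (Fin 2) (Fin 2) ℂ) 0 1).im)
         + s3 l * (((A : Matrix (Fin 2) (Fin 2) ℂ) 0 0).re - ((A : Matrix (Fin 2) (Fin 2) ℂ) 1 1).re))) / 8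

noncomputable def Xfun (A : HermMat 2) (l : Fin 8) : ℝ :=
  (((A : Matrix (Fin 2) (Fin 2) ℂ) 0 0).re + ((A : Matrix (Fin 2) (Fin 2) ℂ) 1 1).re) / 2
    + (s1 l * ((A : Matrix (Fin 2) (Fin 2) ℂ) 0 1).re
     + s2 l * (-((A : Matrix (Fin 2) (Fin 2) ℂ) 0 1).im)
     + s3 l * ((((A : Matrix (Fin 2) (Fin 2) ℂ) 0 0).re - ((A : Matrix (Fin 2) (Fin 2) ℂ) 1 1).re) / 2)) / 2

noncomputable def Mlin : HermMat 2 →ₗ[ℝ] (Fin 8 → ℝ) where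
  toFun A := Mfun A
  map_add' A B := by
    funext l
    simp only [Mfun, AddSubgroup.coe_add, Matrix.add_apply, Complex.add_re, Complex.add_im,
      Pi.add_apply]
    ring
  map_smul' r A := by
    funext l
    simp only [Mfun, selfAdjoint.val_smul, Matrix.smul_apply, Complex.real_smul,
      Complex.mul_re, Complex.mul_im, Complex.ofReal_re, Complex.ofReal_im, RingHom.id_apply,
      Pi.smul_apply, smul_eq_mul]
    ring

noncomputable def Xlin : HermMat 2 →ₗ[ℝ] (Fin 8 → ℝ) where
  toFun A := Xfun A
  map_add' A B := by
    funext l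
    simp only [Xfun, AddSubgroup.coe_add, Matrix.add_apply, Complex.add_re, Complex.add_im,
      Pi.add_apply]
    ring
  map_smul' r A := by
    funext l
    simp only [Xfun, selfAdjoint.val_smul, Matrix.smul_apply, Complex.real_smul,
      Complex.mul_re, Complex.mul_im, Complex.ofReal_re, Complex.ofReal_im, RingHom.id_apply,
      Pi.smul_apply, smul_eq_mul]
    ring

lemma herm_facts (A : HermMat 2) : ((A : Matrix (Fin 2) (Fin 2) ℂ) 0 0).im = 0 ∧
    ((A : Matrix (Fin 2) (Fin 2) ℂ) 1 1).im = 0 ∧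
    ((A : Matrix (Fin 2) (Fin 2) ℂ) 1 0) = starRingEnd ℂ ((A : Matrix (Fin 2) (Fin 2) ℂ) 0 1) := by
  have h := A.2
  rw [selfAdjoint.mem_iff, Matrix.star_eq_conjTranspose] at h
  refine ⟨?_, ?_, ?_⟩
  · have h0 := congrArg Complex.im (congrFun (congrFun h 0) 0)
    simp [Matrix.conjTranspose_apply] at h0
    linarith
  · have h0 := congrArg Complex.im (congrFun (congrFun h 1) 1)
    simp [Matrix.conjTranspose_apply] at h0
    linarith
  · have h0 := congrFun (congrFun h 1) 0
    rw [Matrix.conjTranspose_apply] at h0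
    exact h0.symm

-- the purely algebraic product identity
lemma sum_MX (A B : HermMat 2) :
    (∑ l, Mfun A l * Xfun B l) =
      ((A : Matrix (Fin 2) (Fin 2) ℂ) 0 0).re * ((B : Matrix (Fin 2) (Fin 2) ℂ) 0 0).re
      + ((A : Matrix (Fin 2) (Fin 2) ℂ) 1 1).re * ((B : Matrix (Fin 2) (Fin 2) ℂ) 1 1).re
      + 2 * (((A : Matrix (Fin 2) (Fin 2) ℂ) 0 1).re * ((B : Matrix (Fin 2) (Fin 2) ℂ) 0 1).re)
      + 2 * (((A : Matrix (Fin 2) (Fin 2) ℂ) 0 1).im * ((B : Matrix (Fin 2) (Fin 2) ℂ) 0 1).im) := by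
  rw [Fin.sum_univ_eight]
  simp only [Mfun, Xfun, s1, s2, s3]
  ring

lemma trace_eq (A B : HermMat 2) :
    ((B : Matrix (Fin 2) (Fin 2) ℂ) * (A : Matrix (Fin 2) (Fin 2) ℂ)).trace =
      ((((A : Matrix (Fin 2) (Fin 2) ℂ) 0 0).re * ((B : Matrix (Fin 2) (Fin 2) ℂ) 0 0).re
      + ((A : Matrix (Fin 2) (Fin 2) ℂ) 1 1).re * ((B : Matrix (Fin 2) (Fin 2) ℂ) 1 1).re
      + 2 * (((A : Matrix (Fin 2) (Fin 2) ℂ) 0 1).re * ((B : Matrix (Fin 2) (Fin 2) ℂ) 0 1).re)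
      + 2 * (((A : Matrix (Fin 2) (Fin 2) ℂ) 0 1).im * ((B : Matrix (Fin 2) (Fin 2) ℂ) 0 1).im) : ℝ) : ℂ) := by
  obtain ⟨ha0, ha1, haoff⟩ := herm_facts A
  obtain ⟨hb0, hb1, hboff⟩ := herm_facts B
  rw [Matrix.trace_fin_two]
  simp only [Matrix.mul_apply, Fin.sum_univ_two]
  rw [haoff, hboff]
  apply Complex.ext <;>
    simp [Complex.add_re, Complex.add_im, Complex.mul_re, Complex.mul_im, ha0, ha1, hb0, hb1] <;>
    ring

lemma psd2_det {M : Matrix (Fin 2) (Fin 2) ℂ} (h : M.PosSemidef)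
    (hoff : M 1 0 = starRingEnd ℂ (M 0 1)) (h00 : (M 0 0).im = 0) (h11 : (M 1 1).im = 0) :
    0 ≤ (M 0 0).re ∧ 0 ≤ (M 1 1).re ∧
      (M 0 1).re ^ 2 + (M 0 1).im ^ 2 ≤ (M 0 0).re * (M 1 1).re := by
  have ha : 0 ≤ (M 0 0).re := by
    have := h.re_dotProduct_nonneg ![1, 0]
    simpa [dotProduct, mulVec, Fin.sum_univ_two] using this
  have hd : 0 ≤ (M 1 1).re := by
    have := h.re_dotProduct_nonneg ![0, 1]
    simpa [dotProduct, mulVec, Fin.sum_univ_two] using this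
  refine ⟨ha, hd, ?_⟩
  have hn0 : (0:ℝ) ≤ (M 0 1).re ^ 2 + (M 0 1).im ^ 2 := by positivity
  have key : ∀ s : ℝ, 0 ≤ (M 0 0).re * ((M 0 1).re ^ 2 + (M 0 1).im ^ 2) * s ^ 2
      + 2 * ((M 0 1).re ^ 2 + (M 0 1).im ^ 2) * s + (M 1 1).re := by
    intro s
    have := h.re_dotProduct_nonneg ![(s : ℂ) * (M 0 1), 1]
    simp [dotProduct, mulVec, Fin.sum_univ_two, hoff, Complex.mul_re, Complex.mul_im,
      h00, h11] at this
    nlinarith [this]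
  have hdisc := discrim_le_zero (a := (M 0 0).re * ((M 0 1).re ^ 2 + (M 0 1).im ^ 2))
    (b := 2 * ((M 0 1).re ^ 2 + (M 0 1).im ^ 2)) (c := (M 1 1).re)
    (fun s => by nlinarith [key s])
  rw [discrim] at hdisc
  rcases eq_or_lt_of_le hn0 with hz | hp
  · nlinarith [mul_nonneg ha hd]
  · nlinarith [hdisc, hp]

lemma density_facts (ρ : HermMat 2) (hρ : IsDensity ρ)
    (hnear : frobeniusNorm ((ρ : Matrix (Fin 2) (Fin 2) ℂ) - (1 / 2 : ℂ) • 1) ≤ 1/10) :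
    ((ρ : Matrix (Fin 2) (Fin 2) ℂ) 0 0).re + ((ρ : Matrix (Fin 2) (Fin 2) ℂ) 1 1).re = 1 ∧
    (((ρ : Matrix (Fin 2) (Fin 2) ℂ) 0 0).re - 1/2) ^ 2 +
      (((ρ : Matrix (Fin 2) (Fin 2) ℂ) 1 1).re - 1/2) ^ 2 +
      2 * ((ρ : Matrix (Fin 2) (Fin 2) ℂ) 0 1).re ^ 2 +
      2 * ((ρ : Matrix (Fin 2) (Fin 2) ℂ) 0 1).im ^ 2 ≤ 1/100 := by
  obtain ⟨h00, h11, hoff⟩ := herm_facts ρ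
  constructor
  · have ht := congrArg Complex.re hρ.2
    rw [Matrix.trace_fin_two] at ht
    simpa using ht
  · rw [frobeniusNorm] at hnear
    set S := ∑ i, ∑ j, ‖((ρ : Matrix (Fin 2) (Fin 2) ℂ) - (1 / 2 : ℂ) • 1) i j‖ ^ 2 with hS
    have hS0 : 0 ≤ S := by positivity
    have hSle : S ≤ 1/100 := by
      nlinarith [Real.sq_sqrt hS0, Real.sqrt_nonneg S, hnear]
    rw [hS, Fin.sum_univ_two, Fin.sum_univ_two] at hSle
    simp only [Matrix.sub_apply, Matrix.smul_apply, Matrix.one_apply_eq, Matrix.one_apply_ne,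
      Matrix.one_apply, Fin.zero_eq_one_iff, Fin.one_eq_zero_iff,
      Complex.sq_norm, Complex.normSq_apply, Complex.sub_re, Complex.sub_im, hoff,
      Complex.conj_re, Complex.conj_im, smul_eq_mul] at hSle
    norm_num at hSle
    rw [hoff] at hSle
    simp only [Complex.conj_re, Complex.conj_im, h00, h11] at hSle
    nlinarith [hSle]

set_option maxHeartbeats 2000000 in
/-- there is an `ε > 0` such that the set of all qubit states within Frobenius
distance `ε` of the maximally mixed state `I/2`, paired with the set of all effects, admits a
noncontextual ontological model. -/
theorem epsilon_ball_around_maximally_mixed_noncontextual :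
    ∃ ε : ℝ, 0 < ε ∧
      ∃ (Λ : Type) (_ : Fintype Λ) (M Ξ : HermMat 2 →ₗ[ℝ] (Λ → ℝ)),
        (∀ ρ : HermMat 2, IsDensity ρ →
          frobeniusNorm ((ρ : Matrix (Fin 2) (Fin 2) ℂ) - (1 / 2 : ℂ) • 1) ≤ ε →
            (∀ l, 0 ≤ M ρ l) ∧ (∑ l, M ρ l) = 1) ∧
        (∀ E : HermMat 2, IsEffect E → ∀ l, 0 ≤ Ξ E l) ∧
        (Ξ (oneHerm 2) = fun _ => 1) ∧
        (∀ ρ : HermMat 2, IsDensity ρ →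
          frobeniusNorm ((ρ : Matrix (Fin 2) (Fin 2) ℂ) - (1 / 2 : ℂ) • 1) ≤ ε →
          ∀ E : HermMat 2, IsEffect E →
            ((E : Matrix (Fin 2) (Fin 2) ℂ) * (ρ : Matrix (Fin 2) (Fin 2) ℂ)).trace
              = ((∑ l, M ρ l * Ξ E l : ℝ) : ℂ)) := by
  refine ⟨1/10, by norm_num, Fin 8, inferInstance, Mlin, Xlin, ?_, ?_, ?_, ?_⟩
  · intro ρ hρ hnear
    obtain ⟨ht, hq⟩ := density_facts ρ hρ hnear
    constructor
    · intro l
      fin_cases l <;>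
        · show 0 ≤ Mfun ρ _
          simp only [Mfun, s1, s2, s3]
          nlinarith [hq, ht, sq_nonneg (((ρ : Matrix (Fin 2) (Fin 2) ℂ) 0 1).re + 1/8),
            sq_nonneg (((ρ : Matrix (Fin 2) (Fin 2) ℂ) 0 1).re - 1/8),
            sq_nonneg (((ρ : Matrix (Fin 2) (Fin 2) ℂ) 0 1).im + 1/8),
            sq_nonneg (((ρ : Matrix (Fin 2) (Fin 2) ℂ) 0 1).im - 1/8),
            sq_nonneg (((ρ : Matrix (Fin 2) (Fin 2) ℂ) 0 0).re - ((ρ : Matrix (Fin 2) (Fin 2) ℂ) 1 1).re + 1/4),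
            sq_nonneg (((ρ : Matrix (Fin 2) (Fin 2) ℂ) 0 0).re - ((ρ : Matrix (Fin 2) (Fin 2) ℂ) 1 1).re - 1/4)]
    · show (∑ l, Mfun ρ l) = 1
      rw [Fin.sum_univ_eight]
      simp only [Mfun, s1, s2, s3]
      linarith [ht]
  · intro E hE l
    obtain ⟨h00, h11, hoff⟩ := herm_facts E
    obtain ⟨ha, hd, hdet⟩ := psd2_det hE.1 hoff h00 h11
    fin_cases l <;>
      · show 0 ≤ Xfun E _
        simp only [Xfun, s1, s2, s3]
        nlinarith [hdet, mul_nonneg ha hd,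
          sq_nonneg (((E : Matrix (Fin 2) (Fin 2) ℂ) 0 1).re + ((E : Matrix (Fin 2) (Fin 2) ℂ) 0 1).im),
          sq_nonneg (((E : Matrix (Fin 2) (Fin 2) ℂ) 0 1).re - ((E : Matrix (Fin 2) (Fin 2) ℂ) 0 1).im),
          sq_nonneg (3 * ((E : Matrix (Fin 2) (Fin 2) ℂ) 0 0).re - ((E : Matrix (Fin 2) (Fin 2) ℂ) 1 1).re),
          sq_nonneg (3 * ((E : Matrix (Fin 2) (Fin 2) ℂ) 1 1).re - ((E : Matrix (Fin 2) (Fin 2) ℂ) 0 0).re)]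
  · funext l
    show Xfun (oneHerm 2) l = 1
    simp [Xfun, oneHerm, Matrix.one_apply]
  · intro ρ hρ hnear E hE
    have hsum : (∑ l, Mlin ρ l * Xlin E l) = (∑ l, Mfun ρ l * Xfun E l) := rfl
    rw [hsum, sum_MX ρ E, trace_eq ρ E]
end
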